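/- arXiv:2410.05154 — 3 statements merged into one kernel-verified Lean document; each statement's English description precedes it below -/
import Mathlib

section
/- Let f : GL(d,ℝ) → ℝ be an invariant function (k = 1) with variation function F : GL(d,ℝ) → M_d(ℝ). Then for every g ∈ GL(d,ℝ), the matrix F(g) commutes with g, i.e. g·F(g) = F(g)·g. -/
open Matrix

attribute [local instance] Matrix.normedAddCommGroup Matrix.normedSpace

noncomputable section

/-- An invariant function on `GL(d,ℝ)`: a real-valued function on `d × d` real matrices
that is differentiable on the open set of invertible matrices and invariant under
conjugation. -/
def IsInvariantFunOne (d : ℕ) (f : Matrix (Fin d) (Fin d) ℝ → ℝ) : Prop :=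
  DifferentiableOn ℝ f {g : Matrix (Fin d) (Fin d) ℝ | IsUnit g} ∧
  ∀ h : Matrix (Fin d) (Fin d) ℝ, IsUnit h →
    ∀ g : Matrix (Fin d) (Fin d) ℝ, IsUnit g → f (h * g * h⁻¹) = f g

/-- `F` is the variation function of `f : GL(d,ℝ) → ℝ` with respect to the trace form:
`tr (F g * X)` is the derivative at `t = 0` of `t ↦ f (exp(tX)·g)`, for every `X`. -/
def IsVariationFunOne (d : ℕ) (f : Matrix (Fin d) (Fin d) ℝ → ℝ)
    (F : Matrix (Fin d) (Fin d) ℝ → Matrix (Fin d) (Fin d) ℝ) : Prop :=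
  ∀ g : Matrix (Fin d) (Fin d) ℝ, IsUnit g → ∀ X : Matrix (Fin d) (Fin d) ℝ,
    HasDerivAt (fun t : ℝ => f (NormedSpace.exp (t • X) * g))
      (Matrix.trace (F g * X)) 0

lemma trace_mul_stdBasisMatrix_aux {d : ℕ} (A : Matrix (Fin d) (Fin d) ℝ) (i j : Fin d) :
    Matrix.trace (A * Matrix.single j i 1) = A i j := by
  simp [Matrix.trace, Matrix.diag, Matrix.mul_apply, Matrix.single, ite_and,
    Finset.sum_ite_eq, Finset.sum_ite_eq', mul_ite]

/-- for an invariant function `f : GL(d,ℝ) → ℝ` with variation function `F`,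
the matrix `F g` commutes with `g` for every invertible `g`. -/
theorem variation_function_commutes (d : ℕ)
    (f : Matrix (Fin d) (Fin d) ℝ → ℝ)
    (F : Matrix (Fin d) (Fin d) ℝ → Matrix (Fin d) (Fin d) ℝ)
    (hf : IsInvariantFunOne d f) (hF : IsVariationFunOne d f F)
    (g : Matrix (Fin d) (Fin d) ℝ) (hg : IsUnit g) :
    g * F g = F g * g := by
  have hdet : IsUnit g.det := (Matrix.isUnit_iff_isUnit_det g).mp hg
  have hig : g * g⁻¹ = 1 := Matrix.mul_nonsing_inv g hdet
  have hgi : g⁻¹ * g = 1 := Matrix.nonsing_inv_mul g hdet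
  obtain ⟨u, hu⟩ := hg
  have hg : IsUnit g := ⟨u, hu⟩
  have hinv : (↑u⁻¹ : Matrix (Fin d) (Fin d) ℝ) = g⁻¹ := by
    rw [← hu]; exact Matrix.coe_units_inv u
  -- key: the two curves agree, so their derivatives agree
  have key : ∀ X : Matrix (Fin d) (Fin d) ℝ,
      Matrix.trace (F g * (g * X * g⁻¹)) = Matrix.trace (F g * X) := by
    intro X
    have h1 := hF g hg X
    have h2 := hF g hg (g * X * g⁻¹)
    have heq : (fun t : ℝ => f (NormedSpace.exp (t • (g * X * g⁻¹)) * g))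
        = (fun t : ℝ => f (NormedSpace.exp (t • X) * g)) := by
      funext t
      set E := NormedSpace.exp (t • X) with hE
      have hconj : NormedSpace.exp (t • (g * X * g⁻¹)) = g * E * g⁻¹ := by
        have hsmul : t • (g * X * g⁻¹) = g * (t • X) * g⁻¹ := by
          rw [mul_smul_comm, smul_mul_assoc]
        have := Matrix.exp_units_conj u (t • X)
        rw [hu, hinv] at this
        rw [hsmul, this]
      have hinvar := hf.2 g hg (E * g) ((Matrix.isUnit_exp (t • X)).mul hg)
      have e1 : g * E * g⁻¹ * g = g * E := by
        rw [mul_assoc (g * E) g⁻¹ g, hgi, mul_one]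
      have e2 : g * (E * g) * g⁻¹ = g * E := by
        rw [← mul_assoc, mul_assoc (g * E) g g⁻¹, hig, mul_one]
      rw [hconj, e1, ← e2, hinvar]
    rw [heq] at h2
    exact h2.unique h1
  -- trace nondegeneracy
  have tr_eq : ∀ X, Matrix.trace ((g⁻¹ * F g * g - F g) * X) = 0 := by
    intro X
    rw [Matrix.sub_mul, Matrix.trace_sub, sub_eq_zero]
    calc Matrix.trace (g⁻¹ * F g * g * X)
        = Matrix.trace ((g⁻¹ * F g) * (g * X)) := by rw [mul_assoc]
      _ = Matrix.trace ((g * X) * (g⁻¹ * F g)) := Matrix.trace_mul_comm _ _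
      _ = Matrix.trace ((g * X * g⁻¹) * F g) := by rw [← mul_assoc]
      _ = Matrix.trace (F g * (g * X * g⁻¹)) := Matrix.trace_mul_comm _ _
      _ = Matrix.trace (F g * X) := key X
  have hzero : g⁻¹ * F g * g = F g := by
    rw [← sub_eq_zero]
    ext i j
    have := tr_eq (Matrix.single j i 1)
    rw [trace_mul_stdBasisMatrix_aux] at this
    simpa using this
  calc g * F g = g * (g⁻¹ * F g * g) := by rw [hzero]
    _ = (g * g⁻¹) * F g * g := by rw [← mul_assoc, ← mul_assoc]
    _ = F g * g := by rw [hig, one_mul]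
end
end

section
/- Let Γ₁ and Γ₂ be groups with distinguished elements a₁ ∈ Γ₁ and a₂ ∈ Γ₂, and let π be the amalgamated product of Γ₁ and Γ₂ over ℤ along the homomorphisms ℤ → Γ_i sending 1 ↦ a_i, with canonical homomorphisms ι_i : Γ_i → π, and set a := ι₁(a₁) = ι₂(a₂). Let ρ : π → GL(d,ℝ) be a homomorphism, let f : GL(d,ℝ) → ℝ be an invariant function with variation function F, let n ≥ 1 and t ∈ ℝ, and put x_t := exp(t·n·F(ρ(a)ⁿ)). Then x_t commutes with ρ(a), and consequently there exists a (unique) group homomorphism Ξ_t : π → GL(d,ℝ) satisfying Ξ_t(ι₁(γ)) = ρ(ι₁(γ)) for all γ ∈ Γ₁ and Ξ_t(ι₂(γ)) = x_t·ρ(ι₂(γ))·x_t⁻¹ for all γ ∈ Γ₂; in particular Ξ_t(a) = ρ(a). (This is the representation-level content of the paper's description of the Hamiltonian flow of f_{αⁿ} for a separating simple closed curve α: the flow is covered by the generalized twist Ξ_t.) -/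
open Matrix

attribute [local instance] Matrix.normedAddCommGroup Matrix.normedSpace

noncomputable section

/-- The twist matrix `x_t = exp (t·n·F(aⁿ))`. -/
def twistMatrix (d : ℕ) (F : Matrix (Fin d) (Fin d) ℝ → Matrix (Fin d) (Fin d) ℝ)
    (n : ℕ) (t : ℝ) (a : Matrix (Fin d) (Fin d) ℝ) : Matrix (Fin d) (Fin d) ℝ :=
  NormedSpace.exp ((t * n) • F (a ^ n))

/-- Auxiliary: matrices are determined by traces against all test matrices. -/
lemma trace_ext_aux {d : ℕ} {A B : Matrix (Fin d) (Fin d) ℝ}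
    (h : ∀ X, Matrix.trace (A * X) = Matrix.trace (B * X)) : A = B := by
  ext i j
  have := h (Matrix.single j i 1)
  simpa [Matrix.trace, Matrix.mul_apply, Matrix.single, Matrix.diag,
    ite_and, Finset.sum_ite_eq, Finset.sum_ite_eq'] using this

/-- Auxiliary: the variation function of an invariant function commutes with every unit
that commutes with the base point. -/
lemma variation_commute_aux {d : ℕ} {f : Matrix (Fin d) (Fin d) ℝ → ℝ}
    {F : Matrix (Fin d) (Fin d) ℝ → Matrix (Fin d) (Fin d) ℝ}
    (hf : ∀ h : Matrix (Fin d) (Fin d) ℝ, IsUnit h →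
      ∀ g : Matrix (Fin d) (Fin d) ℝ, IsUnit g → f (h * g * h⁻¹) = f g)
    (hF : ∀ g : Matrix (Fin d) (Fin d) ℝ, IsUnit g → ∀ X : Matrix (Fin d) (Fin d) ℝ,
      HasDerivAt (fun t : ℝ => f (NormedSpace.exp (t • X) * g))
        (Matrix.trace (F g * X)) 0)
    {g : Matrix (Fin d) (Fin d) ℝ} (u : (Matrix (Fin d) (Fin d) ℝ)ˣ)
    (hg : IsUnit g)
    (hcomm : (u : Matrix (Fin d) (Fin d) ℝ) * g = g * (u : Matrix (Fin d) (Fin d) ℝ)) :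
    (u : Matrix (Fin d) (Fin d) ℝ) * F g = F g * (u : Matrix (Fin d) (Fin d) ℝ) := by
  set U : Matrix (Fin d) (Fin d) ℝ := (u : Matrix (Fin d) (Fin d) ℝ) with hU
  set V : Matrix (Fin d) (Fin d) ℝ := ((u⁻¹ : (Matrix (Fin d) (Fin d) ℝ)ˣ) :
    Matrix (Fin d) (Fin d) ℝ) with hV
  have hUV : U * V = 1 := u.mul_inv
  have hVU : V * U = 1 := u.inv_mul
  have hinv_eq : U⁻¹ = V := by rw [hV, hU, Matrix.coe_units_inv]
  have hh' : IsUnit U⁻¹ := by rw [hinv_eq]; exact Units.isUnit _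
  have key : ∀ X, Matrix.trace (F g * X) = Matrix.trace ((U * F g * V) * X) := by
    intro X
    have d1 := hF g hg X
    have d2 := hF g hg (V * X * U)
    have feq : (fun t : ℝ => f (NormedSpace.exp (t • X) * g))
        = (fun t : ℝ => f (NormedSpace.exp (t • (V * X * U)) * g)) := by
      funext t
      have e1 : NormedSpace.exp (t • (V * X * U))
          = V * NormedSpace.exp (t • X) * U := by
        have hs : t • (V * X * U) = V * (t • X) * U := by
          simp [Matrix.mul_smul, Matrix.smul_mul]
        rw [hs, ← hinv_eq, Matrix.exp_conj' U (t • X) u.isUnit, hinv_eq]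
      rw [e1]
      have hu : IsUnit (NormedSpace.exp (t • X) * g) :=
        (Matrix.isUnit_exp (t • X)).mul hg
      have h2 := hf U⁻¹ hh' _ hu
      rw [Matrix.nonsing_inv_nonsing_inv U
        ((Matrix.isUnit_iff_isUnit_det _).mp u.isUnit), hinv_eq] at h2
      rw [← h2]
      congr 1
      simp only [mul_assoc, hcomm]
    rw [feq] at d1
    have htr := d1.unique d2
    rw [htr]
    rw [show F g * (V * X * U) = (F g * (V * X)) * U by simp [mul_assoc]]
    rw [Matrix.trace_mul_comm (F g * (V * X)) U]
    congr 1
    simp [mul_assoc]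
  have hfix : F g = U * F g * V := trace_ext_aux key
  conv_rhs => rw [hfix]
  rw [mul_assoc, hVU, mul_one]

/-- let `π` be the amalgamated product of `Γ₁` and `Γ₂` over `ℤ` along
`1 ↦ a₁` and `1 ↦ a₂` (expressed by its universal property), `ρ : π → GL(d,ℝ)` a
homomorphism, `f` an invariant function with variation function `F`, and
`x_t = exp (t·n·F(ρ(a)ⁿ))` where `a = ι₁ a₁ = ι₂ a₂`. Then `x_t` commutes with `ρ(a)`,
and there is a unique homomorphism `Ξ_t : π → GL(d,ℝ)` equal to `ρ` on `Γ₁` and to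
`x_t · ρ(·) · x_t⁻¹` on `Γ₂`. -/
theorem generalized_twist_amalgamated_product
    {Γ₁ Γ₂ π : Type} [Group Γ₁] [Group Γ₂] [Group π]
    (a₁ : Γ₁) (a₂ : Γ₂) (ι₁ : Γ₁ →* π) (ι₂ : Γ₂ →* π)
    (hbase : ι₁ a₁ = ι₂ a₂)
    (huniv : ∀ (H : Type) [Group H], ∀ (f₁ : Γ₁ →* H) (f₂ : Γ₂ →* H),
      f₁ a₁ = f₂ a₂ → ∃! Φ : π →* H, Φ.comp ι₁ = f₁ ∧ Φ.comp ι₂ = f₂)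
    (d : ℕ) (ρ : π →* Matrix.GeneralLinearGroup (Fin d) ℝ)
    (f : Matrix (Fin d) (Fin d) ℝ → ℝ)
    (F : Matrix (Fin d) (Fin d) ℝ → Matrix (Fin d) (Fin d) ℝ)
    (hf : IsInvariantFunOne d f) (hF : IsVariationFunOne d f F)
    (n : ℕ) (hn : 0 < n) (t : ℝ) :
    twistMatrix d F n t (ρ (ι₁ a₁)) * (ρ (ι₁ a₁) : Matrix (Fin d) (Fin d) ℝ) =
      (ρ (ι₁ a₁) : Matrix (Fin d) (Fin d) ℝ) * twistMatrix d F n t (ρ (ι₁ a₁)) ∧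
    ∃! Ξ : π →* Matrix.GeneralLinearGroup (Fin d) ℝ,
      (∀ γ : Γ₁, (Ξ (ι₁ γ) : Matrix (Fin d) (Fin d) ℝ)
          = (ρ (ι₁ γ) : Matrix (Fin d) (Fin d) ℝ)) ∧
      (∀ γ : Γ₂, (Ξ (ι₂ γ) : Matrix (Fin d) (Fin d) ℝ)
          = twistMatrix d F n t (ρ (ι₁ a₁)) * (ρ (ι₂ γ) : Matrix (Fin d) (Fin d) ℝ) *
            (twistMatrix d F n t (ρ (ι₁ a₁)))⁻¹) := by
  set A : Matrix (Fin d) (Fin d) ℝ := (ρ (ι₁ a₁) : Matrix (Fin d) (Fin d) ℝ) with hA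
  set x : Matrix (Fin d) (Fin d) ℝ := twistMatrix d F n t A with hx
  -- `F (Aⁿ)` commutes with `A`
  have hgA : IsUnit (A ^ n) := ((ρ (ι₁ a₁)).isUnit.pow n)
  have hcommA : A * A ^ n = A ^ n * A := ((Commute.refl A).pow_right n).eq
  have hFA : A * F (A ^ n) = F (A ^ n) * A :=
    variation_commute_aux hf.2 hF (ρ (ι₁ a₁)) hgA hcommA
  -- hence `x` commutes with `A`
  have hcx : Commute A x := by
    have h1 : Commute A ((t * n) • F (A ^ n)) := (show Commute A (F (A ^ n)) from hFA).smul_right _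
    simpa [hx, twistMatrix] using h1.exp_right
  have hxA : x * A = A * x := hcx.symm.eq
  refine ⟨hxA, ?_⟩
  -- `x` is invertible
  have hxu : IsUnit x := by rw [hx]; exact Matrix.isUnit_exp _
  set w : Matrix.GeneralLinearGroup (Fin d) ℝ := hxu.unit with hw
  have hwx : (w : Matrix (Fin d) (Fin d) ℝ) = x := hxu.unit_spec
  have hwinv : ((w⁻¹ : Matrix.GeneralLinearGroup (Fin d) ℝ) :
      Matrix (Fin d) (Fin d) ℝ) = x⁻¹ := by
    rw [Matrix.coe_units_inv, hwx]
  set f₁ : Γ₁ →* Matrix.GeneralLinearGroup (Fin d) ℝ := ρ.comp ι₁ with hf₁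
  set f₂ : Γ₂ →* Matrix.GeneralLinearGroup (Fin d) ℝ :=
    ((MulAut.conj w).toMonoidHom).comp (ρ.comp ι₂) with hf₂
  have hf₂coe : ∀ γ : Γ₂, ((f₂ γ : Matrix.GeneralLinearGroup (Fin d) ℝ) :
      Matrix (Fin d) (Fin d) ℝ) = x * (ρ (ι₂ γ) : Matrix (Fin d) (Fin d) ℝ) * x⁻¹ := by
    intro γ
    simp [hf₂, MulAut.conj_apply, Units.val_mul, hwx, hwinv]
  have hxinv : x * x⁻¹ = 1 :=
    Matrix.mul_nonsing_inv x ((Matrix.isUnit_iff_isUnit_det _).mp hxu)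
  have hbase' : f₁ a₁ = f₂ a₂ := by
    apply Units.ext
    rw [hf₂coe a₂]
    have : (ρ (ι₂ a₂) : Matrix (Fin d) (Fin d) ℝ) = A := by rw [hA, hbase]
    rw [this]
    show A = x * A * x⁻¹
    rw [hxA, mul_assoc, hxinv, mul_one]
  obtain ⟨Φ, ⟨hΦ1, hΦ2⟩, hΦu⟩ :=
    huniv (Matrix.GeneralLinearGroup (Fin d) ℝ) f₁ f₂ hbase'
  refine ⟨Φ, ⟨?_, ?_⟩, ?_⟩
  · intro γ
    have := DFunLike.congr_fun hΦ1 γ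
    simpa [hf₁] using congrArg Units.val this
  · intro γ
    have := DFunLike.congr_fun hΦ2 γ
    have h := congrArg Units.val this
    simp only [MonoidHom.coe_comp, Function.comp_apply] at h
    rw [h, hf₂coe γ]
  · intro Ξ ⟨h1, h2⟩
    apply hΦu
    constructor
    · apply MonoidHom.ext; intro γ
      apply Units.ext
      simpa [hf₁] using h1 γ
    · apply MonoidHom.ext; intro γ
      apply Units.ext
      simp only [MonoidHom.coe_comp, Function.comp_apply]
      rw [hf₂coe γ]
      exact h2 γ
end
end

section
/- Let Γ be a group, a ∈ Γ, let A = ⟨a⟩ and B be subgroups of Γ with an isomorphism φ : A ≅ B, and let π be the HNN extension of Γ relative to φ, with canonical homomorphism of : Γ → π and stable letter τ ∈ π satisfying τ·of(x)·τ⁻¹ = of(φ(x)) for all x ∈ A. Let ρ : π → GL(d,ℝ) be a homomorphism, let f : GL(d,ℝ) → ℝ be an invariant function with variation function F, let n ≥ 1 and t ∈ ℝ, and put x_t := exp(t·n·F(ρ(of(a))ⁿ)). Then x_t commutes with ρ(of(x)) for every x ∈ A, and consequently there exists a (unique) group homomorphism Ξ_t : π → GL(d,ℝ) satisfying Ξ_t(of(γ))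 = ρ(of(γ)) for all γ ∈ Γ and Ξ_t(τ) = ρ(τ)·x_t. (This is the representation-level content of the paper's description of the Hamiltonian flow of f_{αⁿ} for a non-separating simple closed curve α: the flow is covered by the generalized twist Ξ_t.) -/
open Matrix

attribute [local instance] Matrix.normedAddCommGroup Matrix.normedSpace

noncomputable section

/-- Trace-form nondegeneracy. -/
lemma trace_nondegen {d : ℕ} (M : Matrix (Fin d) (Fin d) ℝ)
    (h : ∀ X, Matrix.trace (M * X) = 0) : M = 0 := by
  ext i j
  have := h (Matrix.single j i 1)
  simp only [Matrix.trace, Matrix.mul_apply, Matrix.single, Matrix.diag,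
    Matrix.of_apply, mul_ite, mul_one, mul_zero] at this
  simpa [ite_and, Finset.sum_ite_eq] using this

/-- The variation of an invariant function at `g ^ n` commutes with `g`. -/
lemma var_commute {d : ℕ} {f : Matrix (Fin d) (Fin d) ℝ → ℝ}
    {F : Matrix (Fin d) (Fin d) ℝ → Matrix (Fin d) (Fin d) ℝ}
    (hf : IsInvariantFunOne d f) (hF : IsVariationFunOne d f F)
    (g : Matrix (Fin d) (Fin d) ℝ) (hg : IsUnit g) (n : ℕ) :
    Commute g (F (g ^ n)) := by
  have hgn : IsUnit (g ^ n) := hg.pow n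
  have hdet : IsUnit g.det := (Matrix.isUnit_iff_isUnit_det g).mp hg
  have hgi : g⁻¹ * g = 1 := Matrix.nonsing_inv_mul g hdet
  have hig : g * g⁻¹ = 1 := Matrix.mul_nonsing_inv g hdet
  have key : ∀ X, Matrix.trace (F (g ^ n) * (g * X * g⁻¹)) = Matrix.trace (F (g ^ n) * X) := by
    intro X
    have h1 := hF (g ^ n) hgn (g * X * g⁻¹)
    have h2 := hF (g ^ n) hgn X
    have heq : (fun s : ℝ => f (NormedSpace.exp (s • (g * X * g⁻¹)) * g ^ n))
        = fun s : ℝ => f (NormedSpace.exp (s • X) * g ^ n) := by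
      funext s
      have hs : s • (g * X * g⁻¹) = g * (s • X) * g⁻¹ := by
        rw [mul_smul_comm, smul_mul_assoc]
      rw [hs, Matrix.exp_conj g (s • X) hg]
      have hcomm : g⁻¹ * g ^ n = g ^ n * g⁻¹ := by
        have hpr : g * g ^ n = g ^ n * g := ((Commute.refl g).pow_right n).eq
        calc g⁻¹ * g ^ n = g⁻¹ * g ^ n * (g * g⁻¹) := by rw [hig, mul_one]
          _ = g⁻¹ * (g ^ n * g) * g⁻¹ := by simp only [mul_assoc]
          _ = g⁻¹ * (g * g ^ n) * g⁻¹ := by rw [hpr]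
          _ = (g⁻¹ * g) * (g ^ n * g⁻¹) := by simp only [mul_assoc]
          _ = g ^ n * g⁻¹ := by rw [hgi, one_mul]
      calc f (g * NormedSpace.exp (s • X) * g⁻¹ * g ^ n)
          = f (g * (NormedSpace.exp (s • X) * g ^ n) * g⁻¹) := by
            simp only [mul_assoc, hcomm]
        _ = f (NormedSpace.exp (s • X) * g ^ n) :=
            hf.2 g hg _ ((Matrix.isUnit_exp _).mul hgn)
    rw [heq] at h1
    exact h1.unique h2
  have key2 : ∀ X, Matrix.trace ((F (g ^ n) - g⁻¹ * F (g ^ n) * g) * X) = 0 := by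
    intro X
    have e1 : Matrix.trace (F (g ^ n) * (g * X * g⁻¹))
        = Matrix.trace (g⁻¹ * F (g ^ n) * g * X) := by
      simp only [← mul_assoc]
      rw [Matrix.trace_mul_comm]
      simp only [← mul_assoc]
    rw [Matrix.sub_mul, Matrix.trace_sub, ← e1, key X, sub_self]
  have h0 : F (g ^ n) - g⁻¹ * F (g ^ n) * g = 0 := trace_nondegen _ key2
  have heq : F (g ^ n) = g⁻¹ * F (g ^ n) * g := sub_eq_zero.mp h0
  show g * F (g ^ n) = F (g ^ n) * g
  calc g * F (g ^ n) = g * (g⁻¹ * F (g ^ n) * g) := by rw [← heq]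
    _ = (g * g⁻¹) * F (g ^ n) * g := by simp only [mul_assoc]
    _ = F (g ^ n) * g := by rw [hig, one_mul]

/-- let `π` be the HNN extension of `Γ` relative to an isomorphism
`φ : ⟨a⟩ ≅ B` (expressed by the defining relation for the stable letter `τ` and the
universal property), `ρ : π → GL(d,ℝ)` a homomorphism, `f` an invariant function with
variation function `F`, and `x_t = exp (t·n·F(ρ(of a)ⁿ))`. Then `x_t` commutes with
`ρ(of x)` for every `x ∈ ⟨a⟩`, and there is a unique homomorphism `Ξ_t : π → GL(d,ℝ)`
equal to `ρ` on `Γ` and sending `τ` to `ρ(τ)·x_t`. -/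
theorem generalized_twist_HNN_extension
    {Γ π : Type} [Group Γ] [Group π] (a : Γ) (B : Subgroup Γ)
    (φ : (Subgroup.zpowers a) ≃* B)
    (of : Γ →* π) (τ : π)
    (hrel : ∀ x : Subgroup.zpowers a, τ * of (x : Γ) * τ⁻¹ = of ((φ x : B) : Γ))
    (huniv : ∀ (H : Type) [Group H], ∀ (f : Γ →* H) (u : H),
      (∀ x : Subgroup.zpowers a, u * f (x : Γ) * u⁻¹ = f ((φ x : B) : Γ)) →
        ∃! Φ : π →* H, Φ.comp of = f ∧ Φ τ = u)
    (d : ℕ) (ρ : π →* Matrix.GeneralLinearGroup (Fin d) ℝ)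
    (f : Matrix (Fin d) (Fin d) ℝ → ℝ)
    (F : Matrix (Fin d) (Fin d) ℝ → Matrix (Fin d) (Fin d) ℝ)
    (hf : IsInvariantFunOne d f) (hF : IsVariationFunOne d f F)
    (n : ℕ) (hn : 0 < n) (t : ℝ) :
    (∀ x : Γ, x ∈ Subgroup.zpowers a →
      twistMatrix d F n t (ρ (of a)) * (ρ (of x) : Matrix (Fin d) (Fin d) ℝ)
        = (ρ (of x) : Matrix (Fin d) (Fin d) ℝ) * twistMatrix d F n t (ρ (of a))) ∧
    ∃! Ξ : π →* Matrix.GeneralLinearGroup (Fin d) ℝ,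
      (∀ γ : Γ, (Ξ (of γ) : Matrix (Fin d) (Fin d) ℝ)
          = (ρ (of γ) : Matrix (Fin d) (Fin d) ℝ)) ∧
      (Ξ τ : Matrix (Fin d) (Fin d) ℝ)
          = (ρ τ : Matrix (Fin d) (Fin d) ℝ) * twistMatrix d F n t (ρ (of a)) := by
  set G : Matrix (Fin d) (Fin d) ℝ := (ρ (of a) : Matrix (Fin d) (Fin d) ℝ) with hG
  have hGu : IsUnit G := (ρ (of a)).isUnit
  have hcomm0 : Commute G (F (G ^ n)) := var_commute hf hF G hGu n
  have hxt : Commute (twistMatrix d F n t G) G := by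
    unfold twistMatrix
    exact ((hcomm0.symm.smul_left (t * (n : ℝ))).exp_left)
  have hcommAll : ∀ x : Γ, x ∈ Subgroup.zpowers a →
      Commute (twistMatrix d F n t G) ((ρ (of x) : Matrix (Fin d) (Fin d) ℝ)) := by
    intro x hx
    obtain ⟨k, hk⟩ := Subgroup.mem_zpowers_iff.mp hx
    have hzp : ρ (of x) = (ρ (of a)) ^ k := by rw [← hk, map_zpow, map_zpow]
    rw [hzp]
    exact hxt.units_zpow_right k
  refine ⟨fun x hx => (hcommAll x hx).eq, ?_⟩
  set xu : Matrix.GeneralLinearGroup (Fin d) ℝ :=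
    (Matrix.isUnit_exp ((t * n) • F (G ^ n))).unit with hxu
  have hxuv : (xu : Matrix (Fin d) (Fin d) ℝ) = twistMatrix d F n t G :=
    (Matrix.isUnit_exp ((t * n) • F (G ^ n))).unit_spec
  have hkey : ∀ x : Subgroup.zpowers a,
      (ρ τ * xu) * (ρ.comp of) (x : Γ) * (ρ τ * xu)⁻¹ = (ρ.comp of) ((φ x : B) : Γ) := by
    intro x
    have hc : Commute xu (ρ (of (x : Γ))) := by
      apply Units.ext
      simpa [Units.val_mul, hxuv] using (hcommAll (x : Γ) x.2).eq
    have h1 : xu * ρ (of (x : Γ)) * xu⁻¹ = ρ (of (x : Γ)) := by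
      rw [hc.eq, mul_assoc, mul_inv_cancel, mul_one]
    have h2 := congrArg ρ (hrel x)
    rw [_root_.map_mul, _root_.map_mul, map_inv] at h2
    calc (ρ τ * xu) * (ρ.comp of) (x : Γ) * (ρ τ * xu)⁻¹
        = ρ τ * (xu * ρ (of (x : Γ)) * xu⁻¹) * (ρ τ)⁻¹ := by
          simp only [MonoidHom.comp_apply]
          group
      _ = ρ τ * ρ (of (x : Γ)) * (ρ τ)⁻¹ := by rw [h1]
      _ = (ρ.comp of) ((φ x : B) : Γ) := h2
  obtain ⟨Φ, ⟨hΦ1, hΦ2⟩, hΦuniq⟩ :=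
    huniv (Matrix.GeneralLinearGroup (Fin d) ℝ) (ρ.comp of) (ρ τ * xu) hkey
  refine ⟨Φ, ⟨?_, ?_⟩, ?_⟩
  · intro γ
    have := congrArg (fun ψ : Γ →* Matrix.GeneralLinearGroup (Fin d) ℝ => ψ γ) hΦ1
    simp only [MonoidHom.comp_apply] at this
    rw [this]
  · rw [hΦ2]
    simp [Units.val_mul, hxuv]
  · intro Ξ ⟨hΞ1, hΞ2⟩
    apply hΦuniq
    constructor
    · refine MonoidHom.ext fun γ => Units.ext ?_
      simpa using hΞ1 γ
    · apply Units.ext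
      rw [hΞ2]
      simp [Units.val_mul, hxuv]
end
end
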